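/- Let X be a Hilbert space, S₁,…,S_m nonempty closed convex sets with ∩ᵢS_i = ∅, α_i > 0 with Σα_i = 1, and p ≥ 2. Then for each i, the displacement mapping I − P_i (where P_i is the metric projection onto S_i) is constant on the set A(α,p) = argmin_{x∈X} Σᵢ α_i d(x,S_i)^p; that is, x − P_i(x) = y − P_i(y) for all x, y ∈ A(α,p). -/

import Mathlib

open Metric

theorem displacement_constant_on_argmin {X : Type*} [NormedAddCommGroup X]
    [InnerProductSpace ℝ X] [CompleteSpace X] {m : ℕ}
    (S : Fin m → Set X) (hne : ∀ i, (S i).Nonempty)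
    (hcl : ∀ i, IsClosed (S i)) (hconv : ∀ i, Convex ℝ (S i))
    (hempty : (⋂ i, S i) = ∅)
    (α : Fin m → ℝ) (hα : ∀ i, 0 < α i) (hsum : ∑ i, α i = 1)
    (p : ℝ) (hp : 2 ≤ p)
    (P : Fin m → X → X)
    (hP : ∀ i x, P i x ∈ S i ∧ dist x (P i x) = infDist x (S i)) :
    ∀ x ∈ {z : X | ∀ y : X, ∑ i, α i * infDist z (S i) ^ p ≤
        ∑ i, α i * infDist y (S i) ^ p},
      ∀ y ∈ {z : X | ∀ w : X, ∑ i, α i * infDist z (S i) ^ p ≤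
        ∑ i, α i * infDist w (S i) ^ p},
      ∀ i, x - P i x = y - P i y := by
  intro x hx y hy i
  have hp1 : (1:ℝ) < p := lt_of_lt_of_le one_lt_two hp
  have hp0 : (0:ℝ) < p := lt_trans one_pos hp1
  set dx : Fin m → ℝ := fun j => infDist x (S j) with hdx
  set dy : Fin m → ℝ := fun j => infDist y (S j) with hdy
  set z : X := (2⁻¹ : ℝ) • (x + y) with hz
  -- the midpoint of the projections is in each S j
  have hq : ∀ j, (2⁻¹ : ℝ) • (P j x + P j y) ∈ S j := by
    intro j
    have := hconv j (hP j x).1 (hP j y).1 (by norm_num : (0:ℝ) ≤ 2⁻¹)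
      (by norm_num : (0:ℝ) ≤ 2⁻¹) (by norm_num)
    rwa [smul_add]
  have hnx : ∀ j, ‖x - P j x‖ = dx j := by
    intro j; rw [← dist_eq_norm]; exact (hP j x).2
  have hny : ∀ j, ‖y - P j y‖ = dy j := by
    intro j; rw [← dist_eq_norm]; exact (hP j y).2
  have hzq : ∀ j, z - (2⁻¹ : ℝ) • (P j x + P j y)
      = (2⁻¹ : ℝ) • ((x - P j x) + (y - P j y)) := by
    intro j; rw [hz, ← smul_sub]; congr 1; abel
  -- key distance bound for the midpoint
  have hmid : ∀ j, infDist z (S j) ≤ ‖(x - P j x) + (y - P j y)‖ / 2 := by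
    intro j
    have h1 : infDist z (S j) ≤ dist z ((2⁻¹ : ℝ) • (P j x + P j y)) :=
      infDist_le_dist_of_mem (hq j)
    rw [dist_eq_norm, hzq j, norm_smul] at h1
    simpa [div_eq_inv_mul] using h1
  have hmid' : ∀ j, infDist z (S j) ≤ (dx j + dy j) / 2 := by
    intro j
    refine le_trans (hmid j) ?_
    have := norm_add_le (x - P j x) (y - P j y)
    rw [hnx j, hny j] at this
    linarith
  have hd0 : ∀ j, 0 ≤ dx j := fun j => infDist_nonneg
  have hd0' : ∀ j, 0 ≤ dy j := fun j => infDist_nonneg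
  -- convexity of rpow
  have hcv : ∀ j, ((dx j + dy j) / 2) ^ p ≤ (dx j ^ p + dy j ^ p) / 2 := by
    intro j
    have := (convexOn_rpow (le_of_lt hp1)).2 (Set.mem_Ici.2 (hd0 j))
      (Set.mem_Ici.2 (hd0' j)) (by norm_num : (0:ℝ) ≤ 2⁻¹)
      (by norm_num : (0:ℝ) ≤ 2⁻¹) (by norm_num)
    simp only [smul_eq_mul] at this
    calc ((dx j + dy j) / 2) ^ p = (2⁻¹ * dx j + 2⁻¹ * dy j) ^ p := by ring_nf
      _ ≤ 2⁻¹ * dx j ^ p + 2⁻¹ * dy j ^ p := this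
      _ = (dx j ^ p + dy j ^ p) / 2 := by ring
  have hterm : ∀ j, infDist z (S j) ^ p ≤ (dx j ^ p + dy j ^ p) / 2 := by
    intro j
    exact le_trans (Real.rpow_le_rpow infDist_nonneg (hmid' j) (le_of_lt hp0)) (hcv j)
  -- f x = f y
  have hfxy : ∑ j, α j * dx j ^ p = ∑ j, α j * dy j ^ p :=
    le_antisymm (hx y) (hy x)
  -- f x ≤ f z ≤ sum of termwise bounds = f x, so termwise equality
  have hsum1 : ∑ j, α j * infDist z (S j) ^ p ≤ ∑ j, α j * ((dx j ^ p + dy j ^ p) / 2) :=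
    Finset.sum_le_sum (fun j _ => mul_le_mul_of_nonneg_left (hterm j) (le_of_lt (hα j)))
  have hsum2 : ∑ j, α j * ((dx j ^ p + dy j ^ p) / 2) = ∑ j, α j * dx j ^ p := by
    rw [Finset.sum_congr rfl (fun j _ => by ring :
      ∀ j ∈ Finset.univ, α j * ((dx j ^ p + dy j ^ p) / 2)
        = (α j * dx j ^ p) / 2 + (α j * dy j ^ p) / 2)]
    rw [Finset.sum_add_distrib, ← Finset.sum_div, ← Finset.sum_div, ← hfxy]
    ring
  have hsum3 : ∑ j, α j * dx j ^ p ≤ ∑ j, α j * infDist z (S j) ^ p := hx z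
  have heqsum : ∑ j, α j * infDist z (S j) ^ p
      = ∑ j, α j * ((dx j ^ p + dy j ^ p) / 2) := by
    rw [hsum2]; exact le_antisymm (hsum2 ▸ hsum1) hsum3
  have heq : ∀ j ∈ Finset.univ, α j * infDist z (S j) ^ p
      = α j * ((dx j ^ p + dy j ^ p) / 2) :=
    (Finset.sum_eq_sum_iff_of_le (fun j _ =>
      mul_le_mul_of_nonneg_left (hterm j) (le_of_lt (hα j)))).1 heqsum
  have heqi : infDist z (S i) ^ p = (dx i ^ p + dy i ^ p) / 2 :=
    mul_left_cancel₀ (ne_of_gt (hα i)) (heq i (Finset.mem_univ i))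
  -- dx i = dy i by strict convexity
  have hdeq : dx i = dy i := by
    by_contra hne'
    have hstrict := (strictConvexOn_rpow hp1).2 (Set.mem_Ici.2 (hd0 i))
      (Set.mem_Ici.2 (hd0' i)) hne' (by norm_num : (0:ℝ) < 2⁻¹)
      (by norm_num : (0:ℝ) < 2⁻¹) (by norm_num)
    simp only [smul_eq_mul] at hstrict
    have h1 : ((dx i + dy i) / 2) ^ p < (dx i ^ p + dy i ^ p) / 2 := by
      calc ((dx i + dy i) / 2) ^ p = (2⁻¹ * dx i + 2⁻¹ * dy i) ^ p := by ring_nf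
        _ < 2⁻¹ * dx i ^ p + 2⁻¹ * dy i ^ p := hstrict
        _ = (dx i ^ p + dy i ^ p) / 2 := by ring
    have h2 : infDist z (S i) ^ p ≤ ((dx i + dy i) / 2) ^ p :=
      Real.rpow_le_rpow infDist_nonneg (hmid' i) (le_of_lt hp0)
    linarith [heqi]
  -- infDist z (S i) = dx i
  have hzd : infDist z (S i) = dx i := by
    have hle : infDist z (S i) ≤ dx i := by
      have := hmid' i; rw [← hdeq] at this; linarith
    rcases lt_or_eq_of_le hle with hlt | h
    · exfalso
      have := Real.rpow_lt_rpow infDist_nonneg hlt hp0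
      have h2 : (dx i ^ p + dy i ^ p) / 2 = dx i ^ p := by rw [← hdeq]; ring
      rw [heqi, h2] at this
      exact lt_irrefl _ this
    · exact h
  -- equality in triangle inequality forces equal displacements
  set u : X := x - P i x with hu
  set v : X := y - P i y with hv
  have hnu : ‖u‖ = dx i := hnx i
  have hnv : ‖v‖ = dx i := by rw [hv, hny i, hdeq]
  have hlb : 2 * dx i ≤ ‖u + v‖ := by
    have := hmid i
    rw [hzd] at this
    linarith
  have hsq : ‖u - v‖ ^ 2 = 0 := by
    have h1 : ‖u + v‖ ^ 2 = ‖u‖ ^ 2 + 2 * (inner ℝ u v : ℝ) + ‖v‖ ^ 2 :=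
      norm_add_sq_real u v
    have h2 : ‖u - v‖ ^ 2 = ‖u‖ ^ 2 - 2 * (inner ℝ u v : ℝ) + ‖v‖ ^ 2 :=
      norm_sub_sq_real u v
    have h3 : (2 * dx i) ^ 2 ≤ ‖u + v‖ ^ 2 := by
      apply sq_le_sq'
      · have h0 : (0:ℝ) ≤ 2 * dx i := by linarith [hd0 i]
        linarith [norm_nonneg (u + v)]
      · exact hlb
    have h4 : (0:ℝ) ≤ ‖u - v‖ ^ 2 := sq_nonneg _
    rw [hnu, hnv] at h1 h2
    nlinarith [h1, h2, h3, h4]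
  have huv : u = v := by
    have h5 := pow_eq_zero_iff (n := 2) two_ne_zero |>.1 hsq
    exact sub_eq_zero.1 (norm_eq_zero.1 h5)
  exact huv
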